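/- Let m ≥ 1, let z_0 ∈ ℂ be arbitrary, and let b ∈ ℂ with |b| ≤ 1. Then for all λ_1,…,λ_m ≥ 0, all skew-symmetric complex m×m matrices B_{20}, B_{02}, and all t ≥ 0, one has Φ(Λ, B_{20}, B_{02}, t) ≤ m(|z_0|² - 1). -/

import Mathlib

open Matrix

/-- Squared Frobenius norm of a complex matrix. -/
noncomputable def frobSq {m : ℕ} (B : Matrix (Fin m) (Fin m) ℂ) : ℝ :=
  ∑ i, ∑ j, ‖B i j‖ ^ 2

/-- The `4m × 4m` block matrix `F̃(Λ, B₂₀, B₀₂)` with block rows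
`(b·B₂₀, 0, -z₀·I, Λ)`, `(0, b·B₀₂ᴴ, -Λ, -conj(z₀)·I)`, `(z₀·I, Λ, conj(b)·B₂₀ᴴ, 0)`,
`(-Λ, conj(z₀)·I, 0, conj(b)·B₀₂)`, where `Λ = diag(λ₁,…,λ_m)`. -/
noncomputable def Ftilde (m : ℕ) (z₀ b : ℂ) (lam : Fin m → ℝ)
    (B20 B02 : Matrix (Fin m) (Fin m) ℂ) :
    Matrix ((Fin m ⊕ Fin m) ⊕ (Fin m ⊕ Fin m)) ((Fin m ⊕ Fin m) ⊕ (Fin m ⊕ Fin m)) ℂ :=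
  let Λ : Matrix (Fin m) (Fin m) ℂ := Matrix.diagonal fun j => (lam j : ℂ)
  Matrix.fromBlocks
    (Matrix.fromBlocks (b • B20) 0 0 (b • B02ᴴ))
    (Matrix.fromBlocks (-(z₀ • (1 : Matrix (Fin m) (Fin m) ℂ))) Λ
      (-Λ) (-((starRingEnd ℂ) z₀ • (1 : Matrix (Fin m) (Fin m) ℂ))))
    (Matrix.fromBlocks (z₀ • (1 : Matrix (Fin m) (Fin m) ℂ)) Λ
      (-Λ) ((starRingEnd ℂ) z₀ • (1 : Matrix (Fin m) (Fin m) ℂ)))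
    (Matrix.fromBlocks ((starRingEnd ℂ) b • B20ᴴ) 0 0 ((starRingEnd ℂ) b • B02))

/-- The phase function
`Φ(Λ,B₂₀,B₀₂,t) = -Σ_j λ_j² - (‖B₂₀‖² + ‖B₀₂‖²)/2 - t + (1/2)·log|det F̃|`,
with value `⊥ = -∞` when `det F̃ = 0`. -/
noncomputable def PhiFn (m : ℕ) (z₀ b : ℂ) (lam : Fin m → ℝ)
    (B20 B02 : Matrix (Fin m) (Fin m) ℂ) (t : ℝ) : EReal :=
  if (Ftilde m z₀ b lam B20 B02).det = 0 then ⊥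
  else ((-∑ j, lam j ^ 2 - (frobSq B20 + frobSq B02) / 2 - t
    + (1 / 2) * Real.log ‖(Ftilde m z₀ b lam B20 B02).det‖ : ℝ) : EReal)

/-- Sum of squared moduli of the entries of a (rectangular) complex matrix. -/
noncomputable def sq2 {α β : Type*} [Fintype α] [Fintype β]
    (B : Matrix α β ℂ) : ℝ := ∑ i, ∑ j, Complex.normSq (B i j)

lemma sq2_nonneg {α β : Type*} [Fintype α] [Fintype β] (B : Matrix α β ℂ) :
    0 ≤ sq2 B :=
  Finset.sum_nonneg fun _ _ => Finset.sum_nonneg fun _ _ => Complex.normSq_nonneg _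

lemma sq2_fromBlocks {α β γ δ : Type*} [Fintype α] [Fintype β] [Fintype γ] [Fintype δ]
    (A : Matrix α γ ℂ) (B : Matrix α δ ℂ) (C : Matrix β γ ℂ) (D : Matrix β δ ℂ) :
    sq2 (Matrix.fromBlocks A B C D) = sq2 A + sq2 B + sq2 C + sq2 D := by
  simp only [sq2, Fintype.sum_sum_type, fromBlocks_apply₁₁, fromBlocks_apply₁₂,
    fromBlocks_apply₂₁, fromBlocks_apply₂₂, Finset.sum_add_distrib]
  ring

lemma sq2_smul {α β : Type*} [Fintype α] [Fintype β] (c : ℂ) (B : Matrix α β ℂ) :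
    sq2 (c • B) = Complex.normSq c * sq2 B := by
  simp [sq2, Complex.normSq_mul, Finset.mul_sum]

lemma sq2_neg {α β : Type*} [Fintype α] [Fintype β] (B : Matrix α β ℂ) :
    sq2 (-B) = sq2 B := by simp [sq2]

lemma sq2_conjTranspose {α β : Type*} [Fintype α] [Fintype β] (B : Matrix α β ℂ) :
    sq2 Bᴴ = sq2 B := by
  rw [sq2, Finset.sum_comm]
  simp [sq2, conjTranspose_apply]

lemma sq2_zero {α β : Type*} [Fintype α] [Fintype β] :
    sq2 (0 : Matrix α β ℂ) = 0 := by simp [sq2]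

lemma sq2_one {α : Type*} [Fintype α] [DecidableEq α] :
    sq2 (1 : Matrix α α ℂ) = Fintype.card α := by
  simp [sq2, Matrix.one_apply, apply_ite Complex.normSq]

lemma sq2_diagonal {α : Type*} [Fintype α] [DecidableEq α] (f : α → ℂ) :
    sq2 (Matrix.diagonal f) = ∑ i, Complex.normSq (f i) := by
  simp [sq2, Matrix.diagonal_apply, apply_ite Complex.normSq]

lemma frobSq_eq_sq2 {m : ℕ} (B : Matrix (Fin m) (Fin m) ℂ) : frobSq B = sq2 B := by
  simp [frobSq, sq2, Complex.sq_norm]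

open ComplexOrder in
/-- Key analytic bound: `2·log|det M| ≤ (∑ |Mᵢⱼ|²) - n`, from `log x ≤ x - 1`
applied to the eigenvalues of `MᴴM`. -/
lemma key_log_det_bound {n : Type*} [Fintype n] [DecidableEq n]
    (M : Matrix n n ℂ) (hdet : M.det ≠ 0) :
    2 * Real.log ‖M.det‖ ≤
      (∑ i, ∑ j, Complex.normSq (M i j)) - Fintype.card n := by
  have hPSD : (Mᴴ * M).PosSemidef := Matrix.posSemidef_conjTranspose_mul_self M
  have hA : (Mᴴ * M).IsHermitian := hPSD.isHermitian
  set e := hA.eigenvalues with he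
  have hprod : ∏ i, e i = Complex.normSq M.det := by
    have h1 : ((Mᴴ * M).det : ℂ) = ((∏ i, e i : ℝ) : ℂ) := by
      rw [hA.det_eq_prod_eigenvalues]; push_cast; rfl
    have h2 : ((Mᴴ * M).det : ℂ) = ((Complex.normSq M.det : ℝ) : ℂ) := by
      rw [Matrix.det_mul, Matrix.det_conjTranspose, Complex.normSq_eq_conj_mul_self]; rfl
    exact_mod_cast h1.symm.trans h2
  have hsum : ∑ i, e i = ∑ i, ∑ j, Complex.normSq (M i j) := by
    have h1 : (Mᴴ * M).trace = ((∑ i, e i : ℝ) : ℂ) := by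
      conv_lhs => rw [hA.spectral_theorem]
      rw [Unitary.conjStarAlgAut_apply, Matrix.trace_mul_cycle,
        show (star (hA.eigenvectorUnitary : Matrix n n ℂ)) *
            (hA.eigenvectorUnitary : Matrix n n ℂ) = 1 from
          Matrix.mem_unitaryGroup_iff'.mp (hA.eigenvectorUnitary).2,
        one_mul, Matrix.trace_diagonal]
      push_cast; rfl
    have h2 : (Mᴴ * M).trace = ((∑ i, ∑ j, Complex.normSq (M i j) : ℝ) : ℂ) := by
      rw [Matrix.trace, Finset.sum_comm]
      push_cast
      congr 1
      ext i
      simp [Matrix.diag, Matrix.mul_apply, conjTranspose_apply,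
        Complex.normSq_eq_conj_mul_self]
    exact_mod_cast h1.symm.trans h2
  have hnsq : 0 < Complex.normSq M.det := by
    simpa [Complex.normSq_pos] using hdet
  have hepos : ∀ i, (i : n) ∈ Finset.univ → 0 < e i := by
    intro i _
    rcases lt_or_eq_of_le (hPSD.eigenvalues_nonneg i) with h | h
    · exact h
    · exfalso
      have : ∏ j, e j = 0 := Finset.prod_eq_zero (Finset.mem_univ i) h.symm
      rw [hprod] at this; linarith
  have hlog : Real.log ‖M.det‖ = (∑ i, Real.log (e i)) / 2 := by
    have habs : ‖M.det‖ = Real.sqrt (Complex.normSq M.det) := by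
      rw [Complex.norm_def]
    rw [habs, Real.log_sqrt (Complex.normSq_nonneg _), ← hprod,
      Real.log_prod (fun i hi => (hepos i hi).ne')]
  have hbound : ∑ i, Real.log (e i) ≤ ∑ i, (e i - 1) :=
    Finset.sum_le_sum fun i hi => Real.log_le_sub_one_of_pos (hepos i hi)
  have hfin : ∑ i, (e i - 1) = (∑ i, ∑ j, Complex.normSq (M i j)) - Fintype.card n := by
    rw [Finset.sum_sub_distrib, hsum]; simp
  rw [hlog]
  linarith

lemma sq2_Ftilde (m : ℕ) (z₀ b : ℂ) (lam : Fin m → ℝ)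
    (B20 B02 : Matrix (Fin m) (Fin m) ℂ) :
    sq2 (Ftilde m z₀ b lam B20 B02)
      = 4 * (∑ j, lam j ^ 2) + 4 * m * Complex.normSq z₀
        + 2 * Complex.normSq b * (frobSq B20 + frobSq B02) := by
  rw [Ftilde]
  simp only [sq2_fromBlocks, sq2_smul, sq2_neg, sq2_conjTranspose, sq2_zero, sq2_one,
    sq2_diagonal, Fintype.card_fin, frobSq_eq_sq2, Complex.normSq_conj]
  have : ∑ i, Complex.normSq ((lam i : ℂ)) = ∑ j, lam j ^ 2 := by
    simp [Complex.normSq_ofReal, pow_two]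
  rw [this]
  ring

/-- Let `m ≥ 1`, `z₀ ∈ ℂ` arbitrary and `b ∈ ℂ` with `|b| ≤ 1`.  Then for
all `λ_j ≥ 0`, skew-symmetric `B₂₀, B₀₂` and `t ≥ 0` one has `Φ(Λ,B₂₀,B₀₂,t) ≤ m(|z₀|² - 1)`. -/
theorem phi_upper_bound (m : ℕ) (hm : 1 ≤ m) (z₀ b : ℂ) (hb : ‖b‖ ≤ 1)
    (lam : Fin m → ℝ) (hlam : ∀ j, 0 ≤ lam j)
    (B20 B02 : Matrix (Fin m) (Fin m) ℂ)
    (hB20 : B20ᵀ = -B20) (hB02 : B02ᵀ = -B02)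
    (t : ℝ) (ht : 0 ≤ t) :
    PhiFn m z₀ b lam B20 B02 t ≤ (((m : ℝ) * (‖z₀‖ ^ 2 - 1) : ℝ) : EReal) := by
  rw [PhiFn]
  split_ifs with hdet
  · exact bot_le
  · rw [EReal.coe_le_coe_iff]
    have hkey := key_log_det_bound (Ftilde m z₀ b lam B20 B02) hdet
    have hcard : (Fintype.card ((Fin m ⊕ Fin m) ⊕ (Fin m ⊕ Fin m)) : ℝ) = 4 * m := by
      simp; ring
    have hS : (∑ i, ∑ j, Complex.normSq (Ftilde m z₀ b lam B20 B02 i j))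
        = 4 * (∑ j, lam j ^ 2) + 4 * m * Complex.normSq z₀
          + 2 * Complex.normSq b * (frobSq B20 + frobSq B02) :=
      sq2_Ftilde m z₀ b lam B20 B02
    rw [hS, hcard] at hkey
    have hz : Complex.normSq z₀ = ‖z₀‖ ^ 2 := (Complex.sq_norm z₀).symm
    have hb2 : Complex.normSq b ≤ 1 := by
      rw [← Complex.sq_norm]
      nlinarith [norm_nonneg b]
    have hF20 : 0 ≤ frobSq B20 := by rw [frobSq_eq_sq2]; exact sq2_nonneg _
    have hF02 : 0 ≤ frobSq B02 := by rw [frobSq_eq_sq2]; exact sq2_nonneg _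
    rw [hz] at hkey
    nlinarith [mul_nonneg (sub_nonneg.mpr hb2) (add_nonneg hF20 hF02)]
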